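/- Fix β ∈ [0,2] and measures M_0, M_1, M_2, ... ∈ 𝔐^β. Then M_n → M_0 vaguely on ℝ^d \ {0} (i.e., ∫ f dM_n → ∫ f dM_0 for every bounded continuous f vanishing near 0 and near infinity) if and only if M_n^β → M_0^β vaguely on ℝ^d \ {0}. -/

import Mathlib

open MeasureTheory ENNReal Filter Topology Set

noncomputable section

abbrev Rd (d : ℕ) := EuclideanSpace ℝ (Fin d)

/-- The spherical inversion map `x ↦ x / |x|²` (sending `0` to `0`). -/
def sphInv {d : ℕ} (x : Rd d) : Rd d := (‖x‖ ^ 2)⁻¹ • x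

/-- The β-inversion of a measure `M`:
`M^β(A) = ∫ 1_A(x/|x|²) |x|^{2+β} M(dx)`. -/
def betaInv {d : ℕ} (β : ℝ) (M : Measure (Rd d)) : Measure (Rd d) :=
  Measure.map sphInv (M.withDensity fun x => ENNReal.ofReal (‖x‖ ^ (2 + β)))

/-- `M ∈ 𝔐^β`: `M({0}) = 0` and `∫ (|x|² ∧ |x|^β) M(dx) < ∞`. -/
def MemM {d : ℕ} (β : ℝ) (M : Measure (Rd d)) : Prop :=
  M {0} = 0 ∧ ∫⁻ x, ENNReal.ofReal (min (‖x‖ ^ (2 : ℝ)) (‖x‖ ^ β)) ∂M < ⊤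

/-- Vague convergence on `ℝ^d \ {0}`: convergence of integrals of bounded continuous
functions vanishing on a neighborhood of `0` and a neighborhood of infinity. -/
def VagueConv {d : ℕ} (M : ℕ → Measure (Rd d)) (M0 : Measure (Rd d)) : Prop :=
  ∀ f : Rd d → ℝ, Continuous f → (∃ C : ℝ, ∀ x, |f x| ≤ C) →
    (∃ ε N : ℝ, 0 < ε ∧ ∀ x : Rd d, ‖x‖ < ε ∨ N < ‖x‖ → f x = 0) →
    Tendsto (fun n => ∫ x, f x ∂(M n)) atTop (𝓝 (∫ x, f x ∂M0))

lemma sphInv_zero {d : ℕ} : sphInv (0 : Rd d) = 0 := by simp [sphInv]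

lemma norm_sphInv {d : ℕ} (x : Rd d) (hx : x ≠ 0) : ‖sphInv x‖ = ‖x‖⁻¹ := by
  have hn : ‖x‖ ≠ 0 := norm_ne_zero_iff.2 hx
  rw [sphInv, norm_smul]
  rw [norm_inv, norm_pow, norm_norm]
  field_simp

lemma sphInv_sphInv {d : ℕ} (x : Rd d) : sphInv (sphInv x) = x := by
  by_cases hx : x = 0
  · simp [hx, sphInv_zero]
  · have hn : ‖x‖ ≠ 0 := norm_ne_zero_iff.2 hx
    rw [show sphInv (sphInv x) = (‖sphInv x‖ ^ 2)⁻¹ • sphInv x from rfl,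
      norm_sphInv x hx, sphInv, smul_smul]
    rw [show ((‖x‖⁻¹ ^ 2)⁻¹ * (‖x‖ ^ 2)⁻¹ : ℝ) = 1 by field_simp, one_smul]

lemma measurable_sphInv {d : ℕ} : Measurable (sphInv : Rd d → Rd d) :=
  ((measurable_norm.pow measurable_const).inv).smul measurable_id

lemma continuousAt_sphInv {d : ℕ} {x : Rd d} (hx : x ≠ 0) :
    ContinuousAt (sphInv : Rd d → Rd d) x := by
  have : ContinuousAt (fun y : Rd d => (‖y‖ ^ 2)⁻¹) x :=
    ((continuous_norm.pow 2).continuousAt).inv₀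
      (pow_ne_zero _ (norm_ne_zero_iff.2 hx))
  exact this.smul continuousAt_id

lemma integral_betaInv {d : ℕ} (β : ℝ) (h2β : (0:ℝ) ≤ 2 + β) (M : Measure (Rd d)) (f : Rd d → ℝ)
    (hf : Continuous f) :
    ∫ y, f y ∂(betaInv β M) = ∫ x, (‖x‖ ^ (2 + β)) * f (sphInv x) ∂M := by
  rw [betaInv, integral_map measurable_sphInv.aemeasurable hf.aestronglyMeasurable]
  have hmeas : Measurable fun x : Rd d => Real.toNNReal (‖x‖ ^ (2 + β)) :=
    (((Real.continuous_rpow_const h2β).comp continuous_norm).measurable).real_toNNReal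
  rw [show (fun x : Rd d => ENNReal.ofReal (‖x‖ ^ (2 + β)))
      = fun x => ((Real.toNNReal (‖x‖ ^ (2 + β)) : NNReal) : ℝ≥0∞) from rfl,
    integral_withDensity_eq_integral_smul hmeas]
  congr 1
  ext x
  rw [NNReal.smul_def, Real.coe_toNNReal _ (Real.rpow_nonneg (norm_nonneg x) _),
    smul_eq_mul]

lemma withDensity_map_swap {d : ℕ} (μ : Measure (Rd d)) (g : Rd d → ℝ≥0∞)
    (hg : Measurable g) :
    (Measure.map sphInv μ).withDensity g
      = Measure.map sphInv (μ.withDensity (g ∘ sphInv)) := by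
  ext s hs
  rw [withDensity_apply _ hs, Measure.map_apply measurable_sphInv hs,
    withDensity_apply _ (measurable_sphInv hs),
    ← lintegral_indicator hs, ← lintegral_indicator (measurable_sphInv hs),
    lintegral_map (hg.indicator hs) measurable_sphInv]
  refine lintegral_congr fun x => ?_
  by_cases hx : sphInv x ∈ s <;> simp [indicator, hx, Function.comp]

lemma betaInv_betaInv {d : ℕ} {β : ℝ} (hβ : 0 ≤ β) (M : Measure (Rd d))
    (hM0 : M {0} = 0) : betaInv β (betaInv β M) = M := by
  have h2β : (0 : ℝ) < 2 + β := by linarith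
  set w : Rd d → ℝ≥0∞ := fun x => ENNReal.ofReal (‖x‖ ^ (2 + β)) with hw
  have hwm : Measurable w :=
    (ENNReal.continuous_ofReal.comp
      ((Real.continuous_rpow_const (le_of_lt h2β)).comp continuous_norm)).measurable
  have key : (fun x : Rd d => w x * w (sphInv x)) = ({0}ᶜ : Set (Rd d)).indicator 1 := by
    ext x
    by_cases hx : x = 0
    · simp [hx, hw, sphInv_zero, Real.zero_rpow (ne_of_gt h2β)]
    · have hn : (0 : ℝ) < ‖x‖ := norm_pos_iff.2 hx
      have hr : (0 : ℝ) < ‖x‖ ^ (2 + β) := Real.rpow_pos_of_pos hn _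
      rw [hw]
      simp only [norm_sphInv x hx]
      rw [Real.inv_rpow (le_of_lt hn), ← ENNReal.ofReal_mul (le_of_lt hr),
        mul_inv_cancel₀ (ne_of_gt hr)]
      simp [indicator, hx]
  calc betaInv β (betaInv β M)
      = Measure.map sphInv ((Measure.map sphInv (M.withDensity w)).withDensity w) := rfl
    _ = Measure.map sphInv (Measure.map sphInv
          ((M.withDensity w).withDensity (w ∘ sphInv))) := by
        rw [withDensity_map_swap _ _ hwm]
    _ = (M.withDensity w).withDensity (w ∘ sphInv) := by
        rw [Measure.map_map measurable_sphInv measurable_sphInv]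
        have : (sphInv ∘ sphInv : Rd d → Rd d) = id := funext sphInv_sphInv
        rw [this, Measure.map_id]
    _ = M.withDensity (fun x => w x * w (sphInv x)) := by
        rw [← withDensity_mul _ hwm (hwm.comp measurable_sphInv)]; rfl
    _ = M := by
        rw [key, withDensity_indicator_one (measurableSet_singleton (0 : Rd d)).compl]
        have : ({0}ᶜ : Set (Rd d)) =ᵐ[M] (univ : Set (Rd d)) := by
          rw [ae_eq_univ, compl_compl]; exact hM0
        rw [Measure.restrict_congr_set this, Measure.restrict_univ]

lemma vagueConv_betaInv {d : ℕ} {β : ℝ} (hβ : β ∈ Set.Icc (0 : ℝ) 2)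
    {M : ℕ → Measure (Rd d)} {M0 : Measure (Rd d)}
    (h : VagueConv M M0) : VagueConv (fun n => betaInv β (M n)) (betaInv β M0) := by
  have h2β : (0 : ℝ) < 2 + β := by linarith [hβ.1]
  intro f hf ⟨C, hC⟩ ⟨ε, N, hε, hvan⟩
  set g : Rd d → ℝ := fun x => (‖x‖ ^ (2 + β)) * f (sphInv x) with hg
  set N' : ℝ := max N 1 with hN'
  have hN'pos : (0 : ℝ) < N' := lt_of_lt_of_le one_pos (le_max_right _ _)
  -- g vanishes near 0 and infinity
  have hg_small : ∀ x : Rd d, ‖x‖ < N'⁻¹ → g x = 0 := by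
    intro x hx
    by_cases hx0 : x = 0
    · simp [hg, hx0, Real.zero_rpow (ne_of_gt h2β)]
    · have hn : (0 : ℝ) < ‖x‖ := norm_pos_iff.2 hx0
      have : N' < ‖x‖⁻¹ := by
        rw [← inv_inv N']
        exact inv_strictAnti₀ hn hx
      have hfz : f (sphInv x) = 0 := by
        apply hvan
        right
        rw [norm_sphInv x hx0]
        exact lt_of_le_of_lt (le_max_left _ _) this
      simp [hg, hfz]
  have hg_large : ∀ x : Rd d, ε⁻¹ < ‖x‖ → g x = 0 := by
    intro x hx
    have hεi : (0 : ℝ) < ε⁻¹ := inv_pos.2 hε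
    have hx0 : x ≠ 0 := by
      intro h0; rw [h0, norm_zero] at hx; linarith
    have hfz : f (sphInv x) = 0 := by
      apply hvan
      left
      rw [norm_sphInv x hx0]
      calc ‖x‖⁻¹ < (ε⁻¹)⁻¹ := inv_strictAnti₀ hεi hx
        _ = ε := inv_inv ε
    simp [hg, hfz]
  -- g continuous
  have hC0 : 0 ≤ C := le_trans (abs_nonneg _) (hC 0)
  have hg_cont : Continuous g := by
    rw [continuous_iff_continuousAt]
    intro x
    by_cases hx : ‖x‖ < N'⁻¹
    · have hev : g =ᶠ[𝓝 x] fun _ => 0 := by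
        filter_upwards [Metric.isOpen_ball.mem_nhds
          (show x ∈ Metric.ball (0 : Rd d) N'⁻¹ by simpa [Metric.mem_ball, dist_eq_norm])]
          with y hy
        exact hg_small y (by simpa [Metric.mem_ball, dist_eq_norm] using hy)
      exact continuousAt_const.congr hev.symm
    · have hx0 : x ≠ 0 := by
        intro h0; rw [h0, norm_zero] at hx
        exact hx (inv_pos.2 hN'pos)
      have h1 : ContinuousAt (fun y : Rd d => ‖y‖ ^ (2 + β)) x :=
        (Real.continuousAt_rpow_const ‖x‖ (2 + β) (Or.inr (le_of_lt h2β))).comp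
          continuous_norm.continuousAt
      exact h1.mul (hf.continuousAt.comp (continuousAt_sphInv hx0))
  -- g bounded
  have hg_bdd : ∀ x : Rd d, |g x| ≤ (ε⁻¹ ^ (2 + β)) * C := by
    intro x
    have hb0 : 0 ≤ (ε⁻¹ ^ (2 + β)) * C :=
      mul_nonneg (Real.rpow_nonneg (le_of_lt (inv_pos.2 hε)) _) hC0
    by_cases hx : ‖x‖ ≤ ε⁻¹
    · rw [hg]
      simp only [abs_mul, abs_of_nonneg (Real.rpow_nonneg (norm_nonneg x) (2 + β))]
      exact mul_le_mul (Real.rpow_le_rpow (norm_nonneg x) hx (le_of_lt h2β))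
        (hC _) (abs_nonneg _) (Real.rpow_nonneg (le_of_lt (inv_pos.2 hε)) _)
    · rw [hg_large x (lt_of_not_ge hx), abs_zero]; exact hb0
  have := h g hg_cont ⟨_, hg_bdd⟩
    ⟨N'⁻¹, ε⁻¹, inv_pos.2 hN'pos, fun x hx => hx.elim (hg_small x) (hg_large x)⟩
  simpa only [integral_betaInv β (le_of_lt h2β) _ f hf] using this

theorem stmt4 {d : ℕ} (β : ℝ) (hβ : β ∈ Set.Icc (0 : ℝ) 2)
    (M : ℕ → Measure (Rd d)) (M0 : Measure (Rd d))
    (hM : ∀ n, MemM β (M n)) (hM0 : MemM β M0) :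
    VagueConv M M0 ↔ VagueConv (fun n => betaInv β (M n)) (betaInv β M0) := by
  constructor
  · exact vagueConv_betaInv hβ
  · intro h
    have h2 := vagueConv_betaInv hβ h
    have e0 : betaInv β (betaInv β M0) = M0 := betaInv_betaInv hβ.1 M0 hM0.1
    have en : (fun n => betaInv β (betaInv β (M n))) = M :=
      funext fun n => betaInv_betaInv hβ.1 (M n) (hM n).1
    rw [e0, en] at h2
    exact h2
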